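/- Let k ≥ 1, let F be a feasible solution to a (1,k)-FGC instance on G=(V,E), and let r ∈ V. Let D=(V,A) be the directed multigraph containing, for each unsafe edge e ∈ F ∩ 𝒰, one bidirected pair of arcs arising from e, and, for each safe edge e ∈ F ∩ 𝒮, k+1 bidirected pairs arising from e, where every arc arising from an edge e has cost c_e. Then D contains an r-rooted (k+1)-arborescence of cost at most (k+1)·c(F). -/

import Mathlib

/-!
From a feasible (1,k)-FGC solution `F`, the digraph `D` with one bidirected pair of arcs
per unsafe edge of `F` and `k+1` bidirected pairs per safe edge of `F` contains an
`r`-rooted `(k+1)`-arborescence of cost at most `(k+1)·c(F)`.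

Arcs are modeled by triples `(e, i, b) : E × Fin (k+1) × Bool`, where `b` selects the
orientation of the bidirected pair and `i` indexes the copy (unsafe edges only have the
copy `i = 0`).
-/

/-- The set of edges of `F` having exactly one endpoint in `S`, i.e. `F ∩ δ(S)`. -/
def cutEdges {V E : Type*} [DecidableEq V] (ends : E → V × V) (F : Finset E)
    (S : Finset V) : Finset E :=
  F.filter fun e => ¬(((ends e).1 ∈ S) ↔ ((ends e).2 ∈ S))

/-- `F` is feasible for (p,q)-FGC. -/
def FGCFeasible {V E : Type*} [Fintype V] [DecidableEq V] [DecidableEq E]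
    (ends : E → V × V) (safeE : Finset E) (p q : ℕ) (F : Finset E) : Prop :=
  ∀ F' : Finset E, (∀ e ∈ F', e ∉ safeE) → F'.card ≤ q →
    ∀ S : Finset V, S.Nonempty → S ≠ Finset.univ →
      p ≤ (cutEdges ends (F \ F') S).card

/-- Acyclicity of the underlying undirected multigraph of an arc set. -/
def UndirAcyclic {W A : Type*} [DecidableEq W] (arcs : A → W × W) (T : Finset A) : Prop :=
  ∀ T' ⊆ T, T'.Nonempty →
    T'.card < ((T'.image fun a => (arcs a).1) ∪ (T'.image fun a => (arcs a).2)).card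

/-- `T` is an `r`-rooted arborescence. -/
def IsArborescence {W A : Type*} [DecidableEq W] (arcs : A → W × W) (r : W)
    (T : Finset A) : Prop :=
  UndirAcyclic arcs T ∧
    ∀ v : W, Relation.ReflTransGen (fun x y => ∃ a ∈ T, arcs a = (x, y)) r v

/-- `T` is an `r`-rooted `k`-arborescence: a union of `k` arc-disjoint `r`-rooted
arborescences. -/
def IsKArborescence {W A : Type*} [DecidableEq W] [DecidableEq A] (arcs : A → W × W)
    (r : W) (k : ℕ) (T : Finset A) : Prop :=
  ∃ P : Fin k → Finset A,
    (∀ i, IsArborescence arcs r (P i)) ∧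
    (∀ i j, i ≠ j → Disjoint (P i) (P j)) ∧
    Finset.univ.biUnion P = T

/-- The arc `(e, i, b)` arising from edge `e`: `b` chooses the orientation. -/
def arcEnds {V E : Type*} (ends : E → V × V) (k : ℕ) (a : E × Fin (k + 1) × Bool) :
    V × V :=
  if a.2.2 then ends a.1 else ((ends a.1).2, (ends a.1).1)

set_option linter.unusedSectionVars false
set_option linter.unusedVariables false
set_option maxHeartbeats 1000000
open Finset

section Core
variable {W A : Type*} [Fintype W] [DecidableEq W] [DecidableEq A]
variable (arcs : A → W × W) (r : W)

/-- arcs of `A'` leaving `S`. -/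
def outA (A' : Finset A) (S : Finset W) : Finset A :=
  A'.filter fun a => (arcs a).1 ∈ S ∧ (arcs a).2 ∉ S

lemma outA_submod (A' : Finset A) (S T : Finset W) :
    (outA arcs A' (S ∪ T)).card + (outA arcs A' (S ∩ T)).card ≤
      (outA arcs A' S).card + (outA arcs A' T).card := by
  classical
  have h1 : outA arcs A' (S ∪ T) ∪ outA arcs A' (S ∩ T) ⊆ outA arcs A' S ∪ outA arcs A' T := by
    intro a ha
    simp only [outA, mem_union, mem_filter, mem_inter] at ha ⊢
    tauto
  have h2 : outA arcs A' (S ∪ T) ∩ outA arcs A' (S ∩ T) ⊆ outA arcs A' S ∩ outA arcs A' T := by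
    intro a ha
    simp only [outA, mem_union, mem_filter, mem_inter] at ha ⊢
    tauto
  calc (outA arcs A' (S ∪ T)).card + (outA arcs A' (S ∩ T)).card
      = (outA arcs A' (S ∪ T) ∪ outA arcs A' (S ∩ T)).card
        + (outA arcs A' (S ∪ T) ∩ outA arcs A' (S ∩ T)).card :=
        (card_union_add_card_inter _ _).symm
    _ ≤ (outA arcs A' S ∪ outA arcs A' T).card + (outA arcs A' S ∩ outA arcs A' T).card :=
        Nat.add_le_add (card_le_card h1) (card_le_card h2)
    _ = _ := card_union_add_card_inter _ _

/-- A tight set. -/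
def TightS (A' : Finset A) (k : ℕ) (S : Finset W) : Prop :=
  r ∈ S ∧ S ≠ univ ∧ (outA arcs A' S).card < k

instance (A' : Finset A) (k : ℕ) : DecidablePred (TightS arcs r A' k) := fun S => by
  unfold TightS; infer_instance

lemma union_tight {A' : Finset A} {k : ℕ} {S T : Finset W}
    (hinv : ∀ S : Finset W, r ∈ S → S ≠ univ → k - 1 ≤ (outA arcs A' S).card)
    (hS : TightS arcs r A' k S) (hT : TightS arcs r A' k T) (hST : S ∪ T ≠ univ) :
    TightS arcs r A' k (S ∪ T) := by
  obtain ⟨hrS, hSu, hcS⟩ := hS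
  obtain ⟨hrT, hTu, hcT⟩ := hT
  refine ⟨mem_union_left _ hrS, hST, ?_⟩
  have hIu : S ∩ T ≠ univ := by
    intro h
    apply hSu
    rw [← Finset.univ_subset_iff]
    intro x _
    have hx : x ∈ S ∩ T := by rw [h]; exact mem_univ x
    exact (mem_inter.mp hx).1
  have hI : k - 1 ≤ (outA arcs A' (S ∩ T)).card :=
    hinv _ (mem_inter_of_mem hrS hrT) hIu
  have hsub := outA_submod arcs A' S T
  have hk : 1 ≤ k := Nat.one_le_of_lt (Nat.lt_of_le_of_lt (Nat.zero_le _) hcS)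
  omega

lemma sup_tight {A' : Finset A} {k : ℕ} {v : W}
    (hinv : ∀ S : Finset W, r ∈ S → S ≠ univ → k - 1 ≤ (outA arcs A' S).card)
    (𝒮 : Finset (Finset W)) (h : ∀ S ∈ 𝒮, TightS arcs r A' k S ∧ v ∉ S) :
    𝒮.sup id = ∅ ∨ (TightS arcs r A' k (𝒮.sup id) ∧ v ∉ 𝒮.sup id) := by
  classical
  induction 𝒮 using Finset.induction_on with
  | empty => left; simp
  | @insert S 𝒮' hS ih =>
    have hSm := h S (mem_insert_self _ _)
    have ih' := ih (fun T hT => h T (mem_insert_of_mem hT))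
    rw [Finset.sup_insert]
    rcases ih' with h0 | ⟨ht, hv⟩
    · right
      rw [h0]
      simpa using hSm
    · right
      have hvu : v ∉ (S ⊔ 𝒮'.sup id) := by
        simp only [Finset.sup_eq_union, mem_union]
        rintro (h1 | h2)
        · exact hSm.2 h1
        · exact hv h2
      have hne : S ∪ 𝒮'.sup id ≠ univ := by
        intro hEq
        exact hvu (by rw [Finset.sup_eq_union, hEq]; exact mem_univ v)
      exact ⟨by rw [Finset.sup_eq_union]; exact union_tight arcs r hinv hSm.1 ht hne, hvu⟩

/-- the union of all tight sets avoiding `v`. -/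
def TvSet (A' : Finset A) (k : ℕ) (v : W) : Finset W :=
  ((univ : Finset (Finset W)).filter fun S => TightS arcs r A' k S ∧ v ∉ S).sup id

lemma subset_TvSet {A' : Finset A} {k : ℕ} {v : W} {S : Finset W}
    (hS : TightS arcs r A' k S) (hv : v ∉ S) : S ⊆ TvSet arcs r A' k v := by
  have hm : S ∈ (univ : Finset (Finset W)).filter
      (fun S => TightS arcs r A' k S ∧ v ∉ S) := mem_filter.mpr ⟨mem_univ _, hS, hv⟩
  exact Finset.le_sup (f := id) hm

lemma TvSet_spec {A' : Finset A} {k : ℕ} {v : W}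
    (hinv : ∀ S : Finset W, r ∈ S → S ≠ univ → k - 1 ≤ (outA arcs A' S).card) :
    (TvSet arcs r A' k v = ∅ ∨ TightS arcs r A' k (TvSet arcs r A' k v)) ∧
      v ∉ TvSet arcs r A' k v := by
  have h := sup_tight arcs r hinv
      ((univ : Finset (Finset W)).filter fun S => TightS arcs r A' k S ∧ v ∉ S)
      (fun S hS => (mem_filter.mp hS).2)
  rcases h with h0 | ⟨ht, hv⟩
  · exact ⟨Or.inl h0, by rw [TvSet, h0]; exact notMem_empty v⟩
  · exact ⟨Or.inr ht, hv⟩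

lemma exists_addable (A' : Finset A) (k : ℕ) (hk : 1 ≤ k) (U : Finset W)
    (hrU : r ∈ U) (hUuniv : U ≠ univ)
    (hYcut : ∀ S : Finset W, r ∈ S → S ≠ univ → U ⊆ S → k ≤ (outA arcs A' S).card)
    (hinv : ∀ S : Finset W, r ∈ S → S ≠ univ → k - 1 ≤ (outA arcs A' S).card) :
    ∃ a ∈ A', (arcs a).1 ∈ U ∧ (arcs a).2 ∉ U ∧
      ∀ S : Finset W, r ∈ S → S ≠ univ → (arcs a).1 ∈ S → (arcs a).2 ∉ S →
        k ≤ (outA arcs A' S).card := by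
  classical
  -- choose v₁ outside U maximizing |TvSet v|
  have hne : (univ \ U).Nonempty := by
    rw [sdiff_nonempty]
    intro h
    exact hUuniv (Finset.univ_subset_iff.mp h)
  obtain ⟨v₁, hv₁mem, hv₁max⟩ :=
    Finset.exists_max_image (univ \ U) (fun v => (TvSet arcs r A' k v).card) hne
  have hv₁U : v₁ ∉ U := (mem_sdiff.mp hv₁mem).2
  set T₁ := TvSet arcs r A' k v₁ with hT₁def
  obtain ⟨hT₁alt, hv₁T₁⟩ := TvSet_spec arcs r (v := v₁) hinv
  set Y := U ∪ T₁ with hYdef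
  have hv₁Y : v₁ ∉ Y := by
    simp only [hYdef, mem_union]
    rintro (h | h)
    exacts [hv₁U h, hv₁T₁ h]
  have hYuniv : Y ≠ univ := fun h => hv₁Y (h ▸ mem_univ v₁)
  have hYk : k ≤ (outA arcs A' Y).card :=
    hYcut Y (mem_union_left _ hrU) hYuniv subset_union_left
  -- arcs leaving Y with tail in T₁ are few
  have hT₁card : ((outA arcs A' Y).filter fun a => (arcs a).1 ∈ T₁).card < k := by
    have hsub : ((outA arcs A' Y).filter fun a => (arcs a).1 ∈ T₁) ⊆ outA arcs A' T₁ := by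
      intro a ha
      simp only [outA, mem_filter] at ha ⊢
      exact ⟨ha.1.1, ha.2, fun h => ha.1.2.2 (mem_union_right _ h)⟩
    rcases hT₁alt with h0 | ht
    · have hT1e : T₁ = ∅ := hT₁def.trans h0
      have : outA arcs A' T₁ = ∅ := by
        rw [hT1e]
        apply Finset.filter_false_of_mem
        intro a _
        simp
      calc _ ≤ (outA arcs A' T₁).card := card_le_card hsub
        _ = 0 := by rw [this]; rfl
        _ < k := hk
    · exact Nat.lt_of_le_of_lt (card_le_card hsub) ht.2.2
  -- find an arc leaving Y with tail not in T₁
  have hsplit := Finset.card_filter_add_card_filter_not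
    (s := outA arcs A' Y) (fun a => (arcs a).1 ∈ T₁)
  have hne2 : ((outA arcs A' Y).filter fun a => ¬(arcs a).1 ∈ T₁).Nonempty := by
    rw [← card_pos]
    omega
  obtain ⟨a, ha⟩ := hne2
  rw [mem_filter] at ha
  obtain ⟨haY, haT₁⟩ := ha
  have haA' : a ∈ A' := (mem_filter.mp haY).1
  have hatail : (arcs a).1 ∈ Y := (mem_filter.mp haY).2.1
  have hahead : (arcs a).2 ∉ Y := (mem_filter.mp haY).2.2
  have hatailU : (arcs a).1 ∈ U := by
    rcases mem_union.mp hatail with h | h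
    · exact h
    · exact absurd h haT₁
  have haheadU : (arcs a).2 ∉ U := fun h => hahead (mem_union_left _ h)
  have haheadT₁ : (arcs a).2 ∉ T₁ := fun h => hahead (mem_union_right _ h)
  refine ⟨a, haA', hatailU, haheadU, ?_⟩
  intro S hrS hSuniv htS hhS
  by_contra hlt
  push_neg at hlt
  have hTS : TightS arcs r A' k S := ⟨hrS, hSuniv, hlt⟩
  -- S ∪ T₁ is a tight set avoiding (arcs a).2
  have hSTtight : TightS arcs r A' k (S ∪ T₁) ∧ (arcs a).2 ∉ S ∪ T₁ := by
    have hhead : (arcs a).2 ∉ S ∪ T₁ := by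
      simp only [mem_union]
      rintro (h | h)
      exacts [hhS h, haheadT₁ h]
    refine ⟨?_, hhead⟩
    rcases hT₁alt with h0 | ht
    · rw [hT₁def.trans h0, union_empty]; exact hTS
    · exact union_tight arcs r hinv hTS ht (fun h => hhead (h ▸ mem_univ _))
  have hsubTv : S ∪ T₁ ⊆ TvSet arcs r A' k (arcs a).2 :=
    subset_TvSet arcs r hSTtight.1 hSTtight.2
  have hssub : T₁ ⊂ TvSet arcs r A' k (arcs a).2 := by
    constructor
    · exact subset_trans subset_union_right hsubTv
    · intro hsup
      exact haT₁ (hsup (hsubTv (mem_union_left _ htS)))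
  have hlt2 : T₁.card < (TvSet arcs r A' k (arcs a).2).card := card_lt_card hssub
  have hle : (TvSet arcs r A' k (arcs a).2).card ≤ T₁.card :=
    hv₁max _ (mem_sdiff.mpr ⟨mem_univ _, haheadU⟩)
  omega

/-- the vertex set spanned by a partial arborescence. -/
def UF (F : Finset A) : Finset W := insert r (F.image fun a => (arcs a).2)

def PartialArb (F : Finset A) : Prop :=
  (∀ v : W, (F.filter fun a => (arcs a).2 = v).card ≤ 1) ∧
  (∀ a ∈ F, (arcs a).2 ≠ r) ∧
  (∀ a ∈ F, (arcs a).1 ∈ UF arcs r F) ∧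
  (∀ v ∈ UF arcs r F, Relation.ReflTransGen (fun x y => ∃ a ∈ F, arcs a = (x, y)) r v)

lemma partialArb_empty : PartialArb arcs r (∅ : Finset A) := by
  refine ⟨fun v => by simp, by simp, by simp, fun v hv => ?_⟩
  have : v = r := by simpa [UF] using hv
  rw [this]

lemma partialArb_insert {F : Finset A} (hPA : PartialArb arcs r F) {a : A}
    (htail : (arcs a).1 ∈ UF arcs r F) (hhead : (arcs a).2 ∉ UF arcs r F) :
    PartialArb arcs r (insert a F) ∧ UF arcs r (insert a F) = insert (arcs a).2 (UF arcs r F) := by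
  obtain ⟨hin, hnr, htl, hre⟩ := hPA
  have hUF : UF arcs r (insert a F) = insert (arcs a).2 (UF arcs r F) := by
    simp only [UF, image_insert]
    rw [Finset.insert_comm]
  have hnotinF : a ∉ F := fun h => hhead (mem_insert_of_mem (mem_image_of_mem _ h))
  refine ⟨⟨?_, ?_, ?_, ?_⟩, hUF⟩
  · intro v
    by_cases hv : (arcs a).2 = v
    · have hFempty : F.filter (fun b => (arcs b).2 = v) = ∅ := by
        rw [Finset.filter_eq_empty_iff]
        intro b hb hbv
        exact hhead (hv ▸ hbv ▸ mem_insert_of_mem (mem_image_of_mem _ hb))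
      rw [Finset.filter_insert, if_pos hv, hFempty]
      simp
    · rw [Finset.filter_insert, if_neg hv]
      exact hin v
  · intro b hb
    rcases mem_insert.mp hb with h | h
    · subst h
      intro h2
      apply hhead
      rw [h2]
      exact mem_insert_self r _
    · exact hnr b h
  · intro b hb
    rcases mem_insert.mp hb with h | h
    · subst h
      rw [hUF]; exact mem_insert_of_mem htail
    · rw [hUF]; exact mem_insert_of_mem (htl b h)
  · intro v hv
    rw [hUF] at hv
    have hmono : ∀ x y : W, (∃ b ∈ F, arcs b = (x, y)) → ∃ b ∈ insert a F, arcs b = (x, y) :=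
      fun x y ⟨b, hb, he⟩ => ⟨b, mem_insert_of_mem hb, he⟩
    rcases mem_insert.mp hv with h | h
    · subst h
      have h1 := Relation.ReflTransGen.mono hmono _ _ (hre _ htail)
      exact h1.tail ⟨a, mem_insert_self _ _, rfl⟩
    · exact Relation.ReflTransGen.mono hmono _ _ (hre v h)

/-- grow a partial arborescence to a spanning one, keeping the residual cut bound. -/
lemma grow (B : Finset A) (k : ℕ) (hk : 1 ≤ k)
    (hB : ∀ S : Finset W, r ∈ S → S ≠ univ → k ≤ (outA arcs B S).card) :
    ∃ F ⊆ B, PartialArb arcs r F ∧ UF arcs r F = univ ∧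
      ∀ S : Finset W, r ∈ S → S ≠ univ → k - 1 ≤ (outA arcs (B \ F) S).card := by
  classical
  suffices h : ∀ n (F : Finset A), F ⊆ B → PartialArb arcs r F →
      (∀ a ∈ F, (arcs a).2 ∈ UF arcs r F) →
      (∀ S : Finset W, r ∈ S → S ≠ univ → k - 1 ≤ (outA arcs (B \ F) S).card) →
      (univ \ UF arcs r F).card ≤ n →
      ∃ F' ⊆ B, PartialArb arcs r F' ∧ UF arcs r F' = univ ∧
        ∀ S : Finset W, r ∈ S → S ≠ univ → k - 1 ≤ (outA arcs (B \ F') S).card by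
    refine h (univ \ UF arcs r (∅ : Finset A)).card ∅ (empty_subset _)
      (partialArb_empty arcs r) (by simp) ?_ le_rfl
    intro S hrS hSu
    rw [sdiff_empty]
    exact le_trans (Nat.sub_le k 1) (hB S hrS hSu)
  intro n
  induction n with
  | zero =>
    intro F hFB hPA hheads hinv hcard
    have hUF : UF arcs r F = univ := by
      have : univ \ UF arcs r F = ∅ := card_eq_zero.mp (Nat.le_zero.mp hcard)
      have h2 : univ ⊆ UF arcs r F := by
        intro x _
        by_contra hx
        have : x ∈ univ \ UF arcs r F := mem_sdiff.mpr ⟨mem_univ _, hx⟩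
        rw [‹univ \ UF arcs r F = ∅›] at this
        exact notMem_empty x this
      exact Finset.univ_subset_iff.mp h2
    exact ⟨F, hFB, hPA, hUF, hinv⟩
  | succ n ih =>
    intro F hFB hPA hheads hinv hcard
    by_cases hUF : UF arcs r F = univ
    · exact ⟨F, hFB, hPA, hUF, hinv⟩
    · have hrUF : r ∈ UF arcs r F := mem_insert_self _ _
      have hYcut : ∀ S : Finset W, r ∈ S → S ≠ univ → UF arcs r F ⊆ S →
          k ≤ (outA arcs (B \ F) S).card := by
        intro S hrS hSu hUS
        have hsplit : outA arcs B S = outA arcs (B \ F) S ∪ outA arcs F S := by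
          rw [outA, outA, outA, ← filter_union, sdiff_union_of_subset hFB]
        have hFS : outA arcs F S = ∅ := by
          rw [outA, Finset.filter_eq_empty_iff]
          intro b hb hbS
          exact hbS.2 (hUS (hheads b hb))
        have := hB S hrS hSu
        rw [hsplit, hFS, union_empty] at this
        exact this
      obtain ⟨a, haBF, hatail, hahead, hsafe⟩ :=
        exists_addable arcs r (B \ F) k hk (UF arcs r F) hrUF hUF hYcut hinv
      obtain ⟨hPA2, hUF2⟩ := partialArb_insert arcs r hPA hatail hahead
      have haB : a ∈ B := (mem_sdiff.mp haBF).1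
      have hFB2 : insert a F ⊆ B := insert_subset haB hFB
      have hheads2 : ∀ b ∈ insert a F, (arcs b).2 ∈ UF arcs r (insert a F) := by
        intro b hb
        rcases mem_insert.mp hb with h | h
        · subst h; rw [hUF2]; exact mem_insert_self _ _
        · rw [hUF2]; exact mem_insert_of_mem (hheads b h)
      have hinv2 : ∀ S : Finset W, r ∈ S → S ≠ univ →
          k - 1 ≤ (outA arcs (B \ insert a F) S).card := by
        intro S hrS hSu
        have hBdiff : B \ insert a F = (B \ F).erase a := by
          ext x
          simp only [mem_sdiff, mem_erase, mem_insert]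
          tauto
        rw [hBdiff, outA, filter_erase, ← outA]
        by_cases haS : a ∈ outA arcs (B \ F) S
        · have hk2 : k ≤ (outA arcs (B \ F) S).card := by
            have := (mem_filter.mp haS).2
            exact hsafe S hrS hSu this.1 this.2
          have := Finset.card_erase_of_mem haS
          omega
        · rw [Finset.erase_eq_of_notMem haS]
          exact hinv S hrS hSu
      have hcard2 : (univ \ UF arcs r (insert a F)).card ≤ n := by
        have hss : univ \ UF arcs r (insert a F) ⊂ univ \ UF arcs r F := by
          constructor
          · intro x hx
            rw [mem_sdiff] at hx ⊢
            refine ⟨hx.1, fun h => hx.2 ?_⟩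
            rw [hUF2]; exact mem_insert_of_mem h
          · intro hsup
            have : (arcs a).2 ∈ univ \ UF arcs r F := mem_sdiff.mpr ⟨mem_univ _, hahead⟩
            have h2 := hsup this
            rw [mem_sdiff, hUF2] at h2
            exact h2.2 (mem_insert_self _ _)
        have := card_lt_card hss
        omega
      exact ih (insert a F) hFB2 hPA2 hheads2 hinv2 hcard2

/-- a spanning partial arborescence is an arborescence. -/
lemma partialArb_isArborescence {F : Finset A} (hPA : PartialArb arcs r F)
    (hspan : UF arcs r F = univ) : IsArborescence arcs r F := by
  obtain ⟨hin, hnr, htl, hre⟩ := hPA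
  constructor
  · -- acyclicity
    intro T' hT'F hT'ne
    set heads := T'.image fun a => (arcs a).2 with hheads
    set VS := (T'.image fun a => (arcs a).1) ∪ (T'.image fun a => (arcs a).2) with hVS
    -- heads are distinct
    have hinj : Set.InjOn (fun a => (arcs a).2) ↑T' := by
      intro a ha b hb hab
      simp only [Finset.mem_coe] at ha hb
      have h1 : a ∈ F.filter (fun x => (arcs x).2 = (arcs a).2) :=
        mem_filter.mpr ⟨hT'F ha, rfl⟩
      have h2 : b ∈ F.filter (fun x => (arcs x).2 = (arcs a).2) :=
        mem_filter.mpr ⟨hT'F hb, hab.symm⟩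
      exact Finset.card_le_one.mp (hin (arcs a).2) a h1 b h2
    have hcard : heads.card = T'.card := card_image_of_injOn hinj
    -- find a vertex of VS that is not a head
    have key : ∀ v : W, Relation.ReflTransGen (fun x y => ∃ a ∈ F, arcs a = (x, y)) r v →
        v ∈ VS → ∃ w ∈ VS, w ∉ heads := by
      intro v hv
      induction hv with
      | refl =>
        intro hrVS
        refine ⟨r, hrVS, ?_⟩
        intro hr
        obtain ⟨a, haT', ha2⟩ := mem_image.mp hr
        exact hnr a (hT'F haT') ha2
      | tail hpath hstep ih =>
        rename_i b v'
        intro hvVS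
        by_cases hvh : v' ∈ heads
        · obtain ⟨c, hcT', hc2⟩ := mem_image.mp hvh
          obtain ⟨a, haF, hae⟩ := hstep
          have hav : (arcs a).2 = v' := by rw [hae]
          have hac : a = c := by
            have h1 : a ∈ F.filter (fun x => (arcs x).2 = v') := mem_filter.mpr ⟨haF, hav⟩
            have h2 : c ∈ F.filter (fun x => (arcs x).2 = v') :=
              mem_filter.mpr ⟨hT'F hcT', hc2⟩
            exact Finset.card_le_one.mp (hin v') a h1 c h2
          have hbVS : b ∈ VS := by
            apply mem_union_left
            apply mem_image.mpr
            refine ⟨a, hac ▸ hcT', ?_⟩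
            rw [hae]
          exact ih hbVS
        · exact ⟨v', hvVS, hvh⟩
    obtain ⟨a₀, ha₀⟩ := hT'ne
    have hv₀VS : (arcs a₀).1 ∈ VS := mem_union_left _ (mem_image_of_mem _ ha₀)
    have hv₀U : (arcs a₀).1 ∈ UF arcs r F := htl a₀ (hT'F ha₀)
    obtain ⟨w, hwVS, hwh⟩ := key _ (hre _ hv₀U) hv₀VS
    have hss : heads ⊂ VS := by
      constructor
      · intro x hx
        exact mem_union_right _ hx
      · intro hsup
        exact hwh (hsup hwVS)
    have := card_lt_card hss
    omega
  · intro v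
    exact hre v (hspan ▸ mem_univ v)

/-- Edmonds' disjoint arborescence theorem. -/
lemma edmonds : ∀ (k : ℕ) (B : Finset A),
    (∀ S : Finset W, r ∈ S → S ≠ univ → k ≤ (outA arcs B S).card) →
    ∃ P : Fin k → Finset A,
      (∀ i, P i ⊆ B ∧ IsArborescence arcs r (P i)) ∧
      (∀ i j, i ≠ j → Disjoint (P i) (P j)) := by
  intro k
  induction k with
  | zero =>
    intro B _
    exact ⟨fun i => i.elim0, fun i => i.elim0, fun i => i.elim0⟩
  | succ k ih =>
    intro B hB
    obtain ⟨F, hFB, hPA, hspan, hinv⟩ := grow arcs r B (k + 1) (Nat.succ_le_succ (Nat.zero_le _)) hB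
    have hinv' : ∀ S : Finset W, r ∈ S → S ≠ univ → k ≤ (outA arcs (B \ F) S).card := by
      intro S h1 h2
      have := hinv S h1 h2
      omega
    obtain ⟨P', hP'1, hP'2⟩ := ih (B \ F) hinv'
    refine ⟨Fin.cases F P', ?_, ?_⟩
    · intro i
      induction i using Fin.cases with
      | zero => exact ⟨hFB, partialArb_isArborescence arcs r hPA hspan⟩
      | succ j =>
        refine ⟨subset_trans (hP'1 j).1 (sdiff_subset), (hP'1 j).2⟩
    · intro i j hij
      induction i using Fin.cases with
      | zero =>
        induction j using Fin.cases with
        | zero => exact absurd rfl hij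
        | succ j' =>
          simp only [Fin.cases_zero, Fin.cases_succ]
          exact Finset.disjoint_of_subset_right (hP'1 j').1 disjoint_sdiff
      | succ i' =>
        induction j using Fin.cases with
        | zero =>
          simp only [Fin.cases_zero, Fin.cases_succ]
          exact Finset.disjoint_of_subset_left (hP'1 i').1 sdiff_disjoint
        | succ j' =>
          simp only [Fin.cases_succ]
          exact hP'2 i' j' (fun h => hij (h ▸ rfl))

end Core

/-- in an undirected-acyclic arc set over `arcEnds`, distinct arcs have distinct edges. -/
lemma edge_injOn {V E : Type*} [Fintype V] [DecidableEq V] [DecidableEq E]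
    (ends : E → V × V) (k : ℕ) {T : Finset (E × Fin (k + 1) × Bool)}
    (hT : UndirAcyclic (arcEnds ends k) T) :
    Set.InjOn (fun a : E × Fin (k + 1) × Bool => a.1) ↑T := by
  intro a ha b hb hab
  simp only [Finset.mem_coe] at ha hb
  have hab' : a.1 = b.1 := hab
  by_contra hne
  set T' : Finset (E × Fin (k + 1) × Bool) := {a, b} with hT'
  have hsub : T' ⊆ T := by
    intro x hx
    rcases Finset.mem_insert.mp hx with h | h
    · exact h ▸ ha
    · exact (Finset.mem_singleton.mp h) ▸ hb
  have hcard : T'.card = 2 := Finset.card_pair hne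
  have hlt := hT T' hsub ⟨a, Finset.mem_insert_self _ _⟩
  have hVS : ((T'.image fun x => (arcEnds ends k x).1) ∪
      (T'.image fun x => (arcEnds ends k x).2)) ⊆ {(ends a.1).1, (ends a.1).2} := by
    intro v hv
    have hends : ∀ x ∈ T', (arcEnds ends k x).1 ∈ ({(ends a.1).1, (ends a.1).2} : Finset V) ∧
        (arcEnds ends k x).2 ∈ ({(ends a.1).1, (ends a.1).2} : Finset V) := by
      intro x hx
      have hx1 : x.1 = a.1 := by
        rcases Finset.mem_insert.mp hx with h | h
        · rw [h]
        · rw [Finset.mem_singleton.mp h, ← hab']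
      unfold arcEnds
      rw [hx1]
      by_cases hb2 : x.2.2 <;> simp [hb2, Finset.mem_insert]
    rcases Finset.mem_union.mp hv with h | h <;>
      obtain ⟨x, hx, hxe⟩ := Finset.mem_image.mp h
    · exact hxe ▸ (hends x hx).1
    · exact hxe ▸ (hends x hx).2
  have hle : ((T'.image fun x => (arcEnds ends k x).1) ∪
      (T'.image fun x => (arcEnds ends k x).2)).card ≤ 2 :=
    le_trans (Finset.card_le_card hVS) (Finset.card_insert_le _ _ |>.trans (by simp))
  omega

theorem stmt3 {V E : Type*} [Fintype V] [DecidableEq V] [Fintype E] [DecidableEq E]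
    (ends : E → V × V) (hloop : ∀ e : E, (ends e).1 ≠ (ends e).2)
    (safeE : Finset E) (c : E → ℝ) (hc : ∀ e, 0 ≤ c e)
    (k : ℕ) (hk : 1 ≤ k) (F : Finset E)
    (hF : FGCFeasible ends safeE 1 k F) (r : V) :
    ∃ T : Finset (E × Fin (k + 1) × Bool),
      (∀ a ∈ T, a.1 ∈ F ∧ (a.1 ∈ safeE ∨ a.2.1 = 0)) ∧
      IsKArborescence (arcEnds ends k) r (k + 1) T ∧
      ∑ a ∈ T, c a.1 ≤ ((k : ℝ) + 1) * ∑ e ∈ F, c e := by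
  classical
  set B : Finset (E × Fin (k + 1) × Bool) :=
    Finset.univ.filter (fun a => a.1 ∈ F ∧ (a.1 ∈ safeE ∨ a.2.1 = 0)) with hBdef
  -- the cut condition
  have hcut : ∀ S : Finset V, r ∈ S → S ≠ univ →
      k + 1 ≤ (outA (arcEnds ends k) B S).card := by
    intro S hrS hSu
    set C : Finset E := cutEdges ends F S with hCdef
    have hcross : ∀ e ∈ C, ¬(((ends e).1 ∈ S) ↔ ((ends e).2 ∈ S)) :=
      fun e he => (Finset.mem_filter.mp he).2
    have hCF : C ⊆ F := Finset.filter_subset _ _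
    have harc : ∀ e ∈ C, ∀ i : Fin (k + 1),
        (e ∈ safeE ∨ i = 0) →
        (e, i, decide ((ends e).1 ∈ S)) ∈ outA (arcEnds ends k) B S := by
      intro e he i hi
      have hcr := hcross e he
      refine Finset.mem_filter.mpr ⟨Finset.mem_filter.mpr ⟨Finset.mem_univ _,
        hCF he, hi⟩, ?_⟩
      by_cases h1 : (ends e).1 ∈ S
      · have h2 : (ends e).2 ∉ S := fun h => hcr ⟨fun _ => h, fun _ => h1⟩
        simp [arcEnds, h1, h2]
      · have h2 : (ends e).2 ∈ S := by
          by_contra h2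
          exact hcr ⟨fun h => absurd h h1, fun h => absurd h h2⟩
        simp [arcEnds, h1, h2]
    by_cases hsafe : ∃ e ∈ C, e ∈ safeE
    · obtain ⟨e, heC, heS⟩ := hsafe
      have himg : (Finset.univ : Finset (Fin (k+1))).image
          (fun i => (e, i, decide ((ends e).1 ∈ S))) ⊆ outA (arcEnds ends k) B S := by
        intro x hx
        obtain ⟨i, _, hi⟩ := Finset.mem_image.mp hx
        exact hi ▸ harc e heC i (Or.inl heS)
      have hicard : ((Finset.univ : Finset (Fin (k+1))).image
          (fun i => (e, i, decide ((ends e).1 ∈ S)))).card = k + 1 := by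
        rw [Finset.card_image_of_injective _ (fun i j hij => by
          simpa using congrArg (fun x : E × Fin (k+1) × Bool => x.2.1) hij)]
        simp
      calc k + 1 = _ := hicard.symm
        _ ≤ _ := Finset.card_le_card himg
    · push_neg at hsafe
      have hCbig : k + 1 ≤ C.card := by
        by_contra hlt
        push_neg at hlt
        have hfeas := hF C hsafe (by omega) S ⟨r, hrS⟩ hSu
        have : cutEdges ends (F \ C) S = ∅ := by
          rw [cutEdges, Finset.filter_eq_empty_iff]
          intro e he hcr
          have heF : e ∈ F := (Finset.mem_sdiff.mp he).1
          exact (Finset.mem_sdiff.mp he).2 (Finset.mem_filter.mpr ⟨heF, hcr⟩)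
        rw [this] at hfeas
        simp at hfeas
      have himg : C.image (fun e => (e, (0 : Fin (k+1)), decide ((ends e).1 ∈ S))) ⊆
          outA (arcEnds ends k) B S := by
        intro x hx
        obtain ⟨e, heC, he⟩ := Finset.mem_image.mp hx
        exact he ▸ harc e heC 0 (Or.inr rfl)
      have hicard : (C.image (fun e => (e, (0 : Fin (k+1)),
          decide ((ends e).1 ∈ S)))).card = C.card :=
        Finset.card_image_of_injective _ (fun i j hij => by
          simpa using congrArg (fun x : E × Fin (k+1) × Bool => x.1) hij)
      calc k + 1 ≤ C.card := hCbig
        _ = _ := hicard.symm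
        _ ≤ _ := Finset.card_le_card himg
  obtain ⟨P, hP1, hP2⟩ := edmonds (arcEnds ends k) r (k + 1) B hcut
  refine ⟨Finset.univ.biUnion P, ?_, ⟨P, fun i => (hP1 i).2, hP2, rfl⟩, ?_⟩
  · intro a ha
    obtain ⟨i, _, hai⟩ := Finset.mem_biUnion.mp ha
    have := (hP1 i).1 hai
    exact (Finset.mem_filter.mp this).2
  · have hdisj : (↑(Finset.univ : Finset (Fin (k+1))) : Set (Fin (k+1))).PairwiseDisjoint P := by
      intro i _ j _ hij
      exact hP2 i j hij
    rw [Finset.sum_biUnion hdisj]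
    have hbound : ∀ i : Fin (k + 1), ∑ a ∈ P i, c a.1 ≤ ∑ e ∈ F, c e := by
      intro i
      have hinj := edge_injOn ends k ((hP1 i).2).1
      rw [← Finset.sum_image hinj]
      apply Finset.sum_le_sum_of_subset_of_nonneg
      · intro e he
        obtain ⟨a, haP, hae⟩ := Finset.mem_image.mp he
        have := (hP1 i).1 haP
        exact hae ▸ ((Finset.mem_filter.mp this).2).1
      · intro e _ _
        exact hc e
    calc ∑ i : Fin (k + 1), ∑ a ∈ P i, c a.1 ≤ ∑ i : Fin (k + 1), ∑ e ∈ F, c e :=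
        Finset.sum_le_sum (fun i _ => hbound i)
      _ = ((k : ℝ) + 1) * ∑ e ∈ F, c e := by
        rw [Finset.sum_const, Finset.card_univ, Fintype.card_fin, nsmul_eq_mul]
        push_cast
        ring
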